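/- Fix c1 > 0 and for n ∈ ℕ define the 4×4 real matrices A = [[6, 0, −2, −4/(3·√c1)], [0,0,0,0], [0,0,0,0], [0,0,0,0]] and B = [[6, 0, 0, −2/(3·√c1)], [0,2,0,0], [0,0,2,0], [0,0,0,2]], and set L(n) = Id − (1/((2n+2)·(2n+1)))·A − (1/(2n+1))·B. Then det L(n) = ((2n² − 3n − 8)/((2n+1)·(n+1)))·((2n−1)/(2n+1))³, and in particular det L(n) ≠ 0 for every n ∈ ℕ, so L(n) is invertible for every n ∈ ℕ. -/
import Mathlib

lemma num_ne_zero (n : ℕ) : (2 * (n : ℝ) ^ 2 - 3 * (n : ℝ) - 8) ≠ 0 := by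
  rcases lt_or_ge n 3 with h | h
  · interval_cases n <;> norm_num
  · have : (3 : ℝ) ≤ (n : ℝ) := by exact_mod_cast h
    nlinarith


lemma detL_aux (a b s : ℝ) :
    ((1 : Matrix (Fin 4) (Fin 4) ℝ) -
      a • !![6, 0, -2, -4 / (3 * s); 0, 0, 0, 0; 0, 0, 0, 0; 0, 0, 0, 0] -
      b • !![6, 0, 0, -2 / (3 * s); 0, 2, 0, 0; 0, 0, 2, 0; 0, 0, 0, 2]).det =
    (1 - 6 * a - 6 * b) * (1 - 2 * b) ^ 3 := by
  have h : ((1 : Matrix (Fin 4) (Fin 4) ℝ) -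
      a • !![6, 0, -2, -4 / (3 * s); 0, 0, 0, 0; 0, 0, 0, 0; 0, 0, 0, 0] -
      b • !![6, 0, 0, -2 / (3 * s); 0, 2, 0, 0; 0, 0, 2, 0; 0, 0, 0, 2]) =
      !![1 - 6 * a - 6 * b, 0, 2 * a, 4 / (3 * s) * a + 2 / (3 * s) * b;
         0, 1 - 2 * b, 0, 0;
         0, 0, 1 - 2 * b, 0;
         0, 0, 0, 1 - 2 * b] := by
    ext i j
    fin_cases i <;> fin_cases j <;>
      simp [Matrix.sub_apply, Matrix.smul_apply, Matrix.one_apply, Matrix.vecHead, Matrix.vecTail] <;> ring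
  rw [h]
  simp [Matrix.det_succ_row_zero, Fin.sum_univ_succ]
  exact Or.inl (by ring)

/-- Podestà–Spiro: the matrices `L(n) = Id − A/((2n+2)(2n+1)) − B/(2n+1)` appearing in
the power-series recursion at the singular orbit have determinant
`((2n² − 3n − 8)/((2n+1)(n+1)))·((2n−1)/(2n+1))³ ≠ 0`, hence are invertible for every
`n ∈ ℕ`. -/
theorem stmt_12
    (c1 : ℝ) (hc1 : 0 < c1)
    (A B : Matrix (Fin 4) (Fin 4) ℝ)
    (hA : A = !![6, 0, -2, -4 / (3 * Real.sqrt c1);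
                 0, 0, 0, 0;
                 0, 0, 0, 0;
                 0, 0, 0, 0])
    (hB : B = !![6, 0, 0, -2 / (3 * Real.sqrt c1);
                 0, 2, 0, 0;
                 0, 0, 2, 0;
                 0, 0, 0, 2])
    (L : ℕ → Matrix (Fin 4) (Fin 4) ℝ)
    (hL : ∀ n : ℕ, L n = 1 - (1 / ((2 * (n : ℝ) + 2) * (2 * (n : ℝ) + 1))) • A -
      (1 / (2 * (n : ℝ) + 1)) • B) :
    ∀ n : ℕ,
      (L n).det = ((2 * (n : ℝ) ^ 2 - 3 * (n : ℝ) - 8) / ((2 * (n : ℝ) + 1) * ((n : ℝ) + 1))) *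
        ((2 * (n : ℝ) - 1) / (2 * (n : ℝ) + 1)) ^ 3 ∧
      (L n).det ≠ 0 ∧
      IsUnit (L n) := by
  intro n
  have h1 : (2 * (n : ℝ) + 1) ≠ 0 := by positivity
  have h2 : (2 * (n : ℝ) + 2) ≠ 0 := by positivity
  have h3 : ((n : ℝ) + 1) ≠ 0 := by positivity
  have hdet : (L n).det = ((2 * (n : ℝ) ^ 2 - 3 * (n : ℝ) - 8) /
      ((2 * (n : ℝ) + 1) * ((n : ℝ) + 1))) * ((2 * (n : ℝ) - 1) / (2 * (n : ℝ) + 1)) ^ 3 := by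
    rw [hL n, hA, hB, detL_aux]
    field_simp
    ring
  have hne : (L n).det ≠ 0 := by
    rw [hdet]
    apply mul_ne_zero
    · exact div_ne_zero (num_ne_zero n) (mul_ne_zero h1 h3)
    · apply pow_ne_zero
      apply div_ne_zero _ h1
      rcases Nat.eq_zero_or_pos n with h | h
      · subst h; norm_num
      · have : (1 : ℝ) ≤ (n : ℝ) := by exact_mod_cast h
        nlinarith
  exact ⟨hdet, hne, (Matrix.isUnit_iff_isUnit_det _).2 (isUnit_iff_ne_zero.2 hne)⟩
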